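/- If H is a subgroup of the homeomorphism group of ω* = βω \ ω such that the dynamical system (ω*, H) is topologically transitive, then |H| ≥ 𝔱 (the tower number). -/

import Mathlib

open Cardinal

/-- The tower number `𝔱`: the least cardinality of a family of infinite
subsets of `ω`, linearly (pre)ordered by almost inclusion `⊆*`, having no
infinite pseudo-intersection. -/
noncomputable def towerNumber : Cardinal :=
  sInf { c : Cardinal | ∃ T : Set (Set ℕ), #T = c ∧ (∀ t ∈ T, t.Infinite) ∧
    (∀ s ∈ T, ∀ t ∈ T, (s \ t).Finite ∨ (t \ s).Finite) ∧
    ∀ s : Set ℕ, s.Infinite → ∃ t ∈ T, (s \ t).Infinite }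

def OmegaStar : Type := {𝒰 : Ultrafilter ℕ // ∀ A : Set ℕ, A.Finite → A ∉ 𝒰}

instance : TopologicalSpace OmegaStar :=
  instTopologicalSpaceSubtype

structure IsHomeoSubgroup (H : Set (OmegaStar ≃ₜ OmegaStar)) : Prop where
  one_mem : Homeomorph.refl OmegaStar ∈ H
  mul_mem : ∀ g ∈ H, ∀ h ∈ H, g.trans h ∈ H
  inv_mem : ∀ g ∈ H, g.symm ∈ H

def IsTopTransitive (H : Set (OmegaStar ≃ₜ OmegaStar)) : Prop :=
  ∀ U : Set OmegaStar, IsOpen U → U.Nonempty → Dense (⋃ h ∈ H, ⇑h '' U)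

namespace TowerAux

open Filter Set Topology

/-- The basic (cl)open subset of `ω*` determined by `s ⊆ ω`. -/
def bstar (s : Set ℕ) : Set OmegaStar := {x : OmegaStar | s ∈ x.1}

lemma isOpen_bstar (s : Set ℕ) : IsOpen (bstar s) :=
  IsOpen.preimage continuous_subtype_val (ultrafilter_isOpen_basic s)

lemma exists_point (s : Set ℕ) (hs : s.Infinite) : ∃ x : OmegaStar, s ∈ x.1 := by
  have hne : (Filter.cofinite ⊓ 𝓟 s).NeBot := hs.cofinite_inf_principal_neBot
  set u := Ultrafilter.of (Filter.cofinite ⊓ 𝓟 s) with hu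
  have hle : ↑u ≤ Filter.cofinite ⊓ 𝓟 s := Ultrafilter.of_le _
  have hmem : s ∈ u := Filter.le_principal_iff.mp (hle.trans inf_le_right)
  have hfree : ∀ A : Set ℕ, A.Finite → A ∉ u := by
    intro A hA
    have hc : Aᶜ ∈ u := (hle.trans inf_le_left) hA.compl_mem_cofinite
    exact Ultrafilter.compl_mem_iff_notMem.mp hc
  exact ⟨⟨u, hfree⟩, hmem⟩

lemma mem_of_almost {x : OmegaStar} {s t : Set ℕ} (hfin : (s \ t).Finite)
    (hs : s ∈ x.1) : t ∈ x.1 := by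
  have h1 : (s \ t)ᶜ ∈ x.1 := Ultrafilter.compl_mem_iff_notMem.mpr (x.2 _ hfin)
  have h2 : s ∩ (s \ t)ᶜ ∈ x.1 := Filter.inter_mem hs h1
  refine Filter.mem_of_superset h2 ?_
  rintro a ⟨has, hnd⟩
  by_contra hat
  exact hnd ⟨has, hat⟩

/-- Key shrinking lemma: given a continuous self-map of `ω*` and an infinite
`A ⊆ ω`, there is an infinite `A' ⊆ A` such that any point of `A'∗` mapped
into `A'∗` is fixed. -/
lemma key_shrink (f : OmegaStar → OmegaStar) (hf : Continuous f)
    (A : Set ℕ) (hA : A.Infinite) :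
    ∃ A' : Set ℕ, A' ⊆ A ∧ A'.Infinite ∧
      ∀ x : OmegaStar, A' ∈ x.1 → A' ∈ (f x).1 → f x = x := by
  by_cases hfix : ∀ x : OmegaStar, A ∈ x.1 → f x = x
  · exact ⟨A, subset_rfl, hA, fun x hx _ => hfix x hx⟩
  · push_neg at hfix
    obtain ⟨x, hxA, hxne⟩ := hfix
    have hex : ∃ S : Set ℕ, S ∈ x.1 ∧ S ∉ (f x).1 := by
      by_contra hcon
      push_neg at hcon
      have hle : ((f x).1 : Filter ℕ) ≤ (x.1 : Filter ℕ) := fun S hS => hcon S hS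
      exact hxne (Subtype.ext (Ultrafilter.coe_le_coe.mp hle))
    obtain ⟨S, hSmem, hSnot⟩ := hex
    have hfxSc : f x ∈ bstar Sᶜ := Ultrafilter.compl_mem_iff_notMem.mpr hSnot
    have hopen : IsOpen (f ⁻¹' bstar Sᶜ) := (isOpen_bstar _).preimage hf
    have hnhds : f ⁻¹' bstar Sᶜ ∈ 𝓝 x := hopen.mem_nhds hfxSc
    rw [show (𝓝 x : Filter OmegaStar) = Filter.comap Subtype.val (𝓝 x.1) from nhds_induced Subtype.val x] at hnhds
    obtain ⟨W, hW1, hW2⟩ := Filter.mem_comap.mp hnhds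
    obtain ⟨t, ⟨B, hBt⟩, hxt, htW⟩ :=
      ultrafilterBasis_is_basis.mem_nhds_iff.mp hW1
    subst hBt
    have hBx : B ∈ x.1 := hxt
    refine ⟨A ∩ B ∩ S, fun a ha => ha.1.1, ?_, ?_⟩
    · have hmem : A ∩ B ∩ S ∈ x.1 := Filter.inter_mem (Filter.inter_mem hxA hBx) hSmem
      by_contra hfin
      rw [Set.not_infinite] at hfin
      exact x.2 _ hfin hmem
    · intro y hy hfy
      exfalso
      have hBy : B ∈ y.1 := Filter.mem_of_superset hy fun a ha => ha.1.2
      have hyW : (y.1 : Ultrafilter ℕ) ∈ W := htW hBy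
      have hfySc : f y ∈ bstar Sᶜ := hW2 hyW
      have hSfy : S ∈ (f y).1 := Filter.mem_of_superset hfy fun a ha => ha.2
      have : (∅ : Set ℕ) ∈ (f y).1 := by
        have := Filter.inter_mem hSfy hfySc
        simpa using this
      exact (f y).2 ∅ Set.finite_empty this

variable (H : Set (OmegaStar ≃ₜ OmegaStar))

def PseudoInt (F : Set (Set ℕ)) (s : Set ℕ) : Prop :=
  s.Infinite ∧ ∀ t ∈ F, (s \ t).Finite

lemma wfH : WellFounded (@WellOrderingRel ↥H) := IsWellFounded.wf

open Classical in
noncomputable def step (h : ↥H) (prev : ∀ g : ↥H, WellOrderingRel g h → Set ℕ) : Set ℕ :=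
  if hc : ∃ s, PseudoInt {t | ∃ g, ∃ hg : WellOrderingRel g h, prev g hg = t} s then
    (key_shrink (⇑h.1) h.1.continuous hc.choose hc.choose_spec.1).choose
  else ∅

noncomputable def towerSeq : ↥H → Set ℕ :=
  (wfH H).fix (step H)

lemma towerSeq_eq (h : ↥H) :
    towerSeq H h = step H h fun g _ => towerSeq H g :=
  WellFounded.fix_eq _ _ _

def Good (h : ↥H) : Prop :=
  ∃ s, PseudoInt {t | ∃ g, ∃ _hg : WellOrderingRel g h, towerSeq H g = t} s

lemma towerSeq_spec (h : ↥H) (hgood : Good H h) :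
    (towerSeq H h).Infinite ∧
    (∀ g : ↥H, WellOrderingRel g h → (towerSeq H h \ towerSeq H g).Finite) ∧
    (∀ x : OmegaStar, towerSeq H h ∈ x.1 → towerSeq H h ∈ (h.1 x).1 → h.1 x = x) := by
  rw [towerSeq_eq]
  unfold step
  have hc : ∃ s, PseudoInt
      {t | ∃ g, ∃ hg : WellOrderingRel g h, (fun g _ => towerSeq H g) g hg = t} s := hgood
  rw [dif_pos hc]
  obtain ⟨hsub, hinf, hprop⟩ :=
    (key_shrink (⇑h.1) h.1.continuous hc.choose hc.choose_spec.1).choose_spec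
  refine ⟨hinf, ?_, hprop⟩
  intro g hgh
  exact (hc.choose_spec.2 (towerSeq H g) ⟨g, hgh, rfl⟩).subset
    (Set.diff_subset_diff_left hsub)

lemma tower_of_no_pseudo (S : Set ↥H) (hS : ∀ g ∈ S, Good H g)
    (hnp : ¬ ∃ s, PseudoInt (towerSeq H '' S) s) :
    towerNumber ≤ #H := by
  set T : Set (Set ℕ) := towerSeq H '' S with hT
  have h1 : ∀ t ∈ T, t.Infinite := by
    rintro t ⟨g, hgS, rfl⟩
    exact (towerSeq_spec H g (hS g hgS)).1
  have h2 : ∀ s ∈ T, ∀ t ∈ T, (s \ t).Finite ∨ (t \ s).Finite := by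
    rintro s ⟨g1, hg1, rfl⟩ t ⟨g2, hg2, rfl⟩
    rcases trichotomous_of WellOrderingRel g1 g2 with hlt | heq | hgt
    · exact Or.inr ((towerSeq_spec H g2 (hS g2 hg2)).2.1 g1 hlt)
    · subst heq; exact Or.inl (by simp)
    · exact Or.inl ((towerSeq_spec H g1 (hS g1 hg1)).2.1 g2 hgt)
  have h3 : ∀ s : Set ℕ, s.Infinite → ∃ t ∈ T, (s \ t).Infinite := by
    intro s hs
    by_contra hcon
    push_neg at hcon
    exact hnp ⟨s, hs, fun t ht => hcon t ht⟩
  have hle1 : towerNumber ≤ #T := csInf_le' ⟨T, rfl, h1, h2, h3⟩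
  refine hle1.trans (Cardinal.mk_image_le.trans ?_)
  exact Cardinal.mk_set_le S

lemma exists_split (A : Set ℕ) (hA : A.Infinite) :
    ∃ B C : Set ℕ, B ⊆ A ∧ C ⊆ A ∧ B.Infinite ∧ C.Infinite ∧ B ∩ C = ∅ := by
  let e := Set.Infinite.natEmbedding A hA
  let f : ℕ → ℕ := fun n => (e n : ℕ)
  have finj : Function.Injective f := fun a b hab => e.injective (Subtype.coe_injective hab)
  refine ⟨Set.range (fun k => f (2 * k)), Set.range (fun k => f (2 * k + 1)),
    ?_, ?_, ?_, ?_, ?_⟩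
  · rintro _ ⟨k, rfl⟩; exact (e (2 * k)).2
  · rintro _ ⟨k, rfl⟩; exact (e (2 * k + 1)).2
  · exact Set.infinite_range_of_injective fun a b h => by have := finj h; omega
  · exact Set.infinite_range_of_injective fun a b h => by have := finj h; omega
  · rw [Set.eq_empty_iff_forall_notMem]
    rintro n ⟨⟨k, hk⟩, ⟨j, hj⟩⟩
    have : 2 * k = 2 * j + 1 := finj (hk.trans hj.symm)
    omega

end TowerAux

open TowerAux in
theorem topTransitive_card_ge_tower
    (H : Set (OmegaStar ≃ₜ OmegaStar)) (hH : IsHomeoSubgroup H)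
    (htr : IsTopTransitive H) :
    towerNumber ≤ #H := by
  classical
  by_cases hall : ∀ h : ↥H, Good H h
  · by_cases hex : ∃ s, PseudoInt (towerSeq H '' (Set.univ : Set ↥H)) s
    · exfalso
      obtain ⟨A, hAinf, hAps⟩ := hex
      obtain ⟨B₀, C₀, hB₀A, hC₀A, hB₀inf, hC₀inf, hdisj⟩ := exists_split A hAinf
      obtain ⟨x₀, hx₀⟩ := exists_point B₀ hB₀inf
      have hdense := htr (bstar B₀) (isOpen_bstar B₀) ⟨x₀, hx₀⟩
      obtain ⟨z₀, hz₀⟩ := exists_point C₀ hC₀inf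
      obtain ⟨z, hzD, hzV⟩ :=
        hdense.exists_mem_open (isOpen_bstar C₀) ⟨z₀, hz₀⟩
      simp only [Set.mem_iUnion] at hzD
      obtain ⟨h, hh, x, hxU, hxz⟩ := hzD
      have hspec := towerSeq_spec H ⟨h, hh⟩ (hall ⟨h, hh⟩)
      have htg : (A \ towerSeq H ⟨h, hh⟩).Finite :=
        hAps _ ⟨⟨h, hh⟩, Set.mem_univ _, rfl⟩
      have hx_tg : towerSeq H ⟨h, hh⟩ ∈ x.1 :=
        mem_of_almost (htg.subset (Set.diff_subset_diff_left hB₀A)) hxU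
      have hz_tg : towerSeq H ⟨h, hh⟩ ∈ (h x).1 := by
        rw [hxz]
        exact mem_of_almost (htg.subset (Set.diff_subset_diff_left hC₀A)) hzV
      have hfix : h x = x := hspec.2.2 x hx_tg hz_tg
      have hC₀x : C₀ ∈ x.1 := by rw [← hfix, hxz]; exact hzV
      have hmem : (∅ : Set ℕ) ∈ x.1 := by
        have := Filter.inter_mem hxU hC₀x
        rwa [hdisj] at this
      exact x.2 ∅ Set.finite_empty hmem
    · exact tower_of_no_pseudo H Set.univ (fun g _ => hall g) hex
  · push_neg at hall
    have hne : {g : ↥H | ¬ Good H g}.Nonempty := hall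
    set h₀ := (wfH H).min _ hne with hh₀
    have hmin : ∀ g : ↥H, WellOrderingRel g h₀ → Good H g := by
      intro g hg
      by_contra hng
      exact (wfH H).not_lt_min _ hng hg
    have hstuck : ¬ Good H h₀ := (wfH H).min_mem _ hne
    refine tower_of_no_pseudo H {g : ↥H | WellOrderingRel g h₀} (fun g hg => hmin g hg) ?_
    intro hcon
    apply hstuck
    obtain ⟨s, hs1, hs2⟩ := hcon
    refine ⟨s, hs1, ?_⟩
    rintro t ⟨g, hg, rfl⟩
    exact hs2 _ ⟨g, hg, rfl⟩
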